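/- For all real α > 0, x > 0 and q ∈ [0,1), ( (α+1+x)/(α(1−q)) + x·q·α ) · Σ_{j=1}^{∞} ( α(1−q)/(α+1) )^j · 1/(x+j) ≥ 1 − αq. -/

import Mathlib

private lemma pow_bound (x : ℝ) (hx : 0 < x) :
    ∀ j : ℕ, ((x + 1) / (x + 2)) ^ j * (x + ((j : ℝ) + 1)) ≤ x + 1 := by
  intro j
  induction j with
  | zero => simp
  | succ n ih =>
    have hs : (0:ℝ) ≤ ((x + 1) / (x + 2)) ^ n := by positivity
    push_cast
    have hkey : ((x + 1) / (x + 2)) * (x + ((n:ℝ) + 2)) ≤ x + ((n:ℝ) + 1) := by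
      rw [div_mul_eq_mul_div, div_le_iff₀ (by linarith)]
      nlinarith [Nat.cast_nonneg (α := ℝ) n]
    calc ((x + 1) / (x + 2)) ^ (n + 1) * (x + ((n:ℝ) + 1 + 1))
        = ((x + 1) / (x + 2)) ^ n * (((x + 1) / (x + 2)) * (x + ((n:ℝ) + 2))) := by
          ring
      _ ≤ ((x + 1) / (x + 2)) ^ n * (x + ((n:ℝ) + 1)) := by
          apply mul_le_mul_of_nonneg_left hkey hs
      _ ≤ x + 1 := ih

/-- Appendix inequality for the case `q > 0` in the proof of Lemma 2 with constant
reward: `g(α,x,q) ≥ 1 − αq`. -/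
theorem g_q_inequality (α x q : ℝ) (hα : 0 < α) (hx : 0 < x)
    (hq0 : 0 ≤ q) (hq1 : q < 1) :
    1 - α * q ≤ ((α + 1 + x) / (α * (1 - q)) + x * q * α) *
      ∑' j : ℕ, (α * (1 - q) / (α + 1)) ^ (j + 1) * (1 / (x + ((j : ℝ) + 1))) := by
  set r : ℝ := α * (1 - q) / (α + 1) with hr_def
  set s : ℝ := (x + 1) / (x + 2) with hs_def
  have hq : 0 < 1 - q := by linarith
  have hα1 : (0:ℝ) < α + 1 := by linarith
  have hr0 : 0 < r := by positivity
  have hr1 : r < 1 := by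
    rw [hr_def, div_lt_one hα1]
    nlinarith
  have hs0 : 0 < s := by positivity
  have hs1 : s < 1 := by
    rw [hs_def, div_lt_one (by linarith)]; linarith
  have hrs0 : 0 ≤ r * s := by positivity
  have hrs1 : r * s < 1 := by
    calc r * s < 1 * 1 := by
          apply mul_lt_mul' (le_of_lt hr1) hs1 (le_of_lt hs0) one_pos
      _ = 1 := by ring
  -- summability of the main series
  have hsum : Summable (fun j : ℕ => r ^ (j + 1) * (1 / (x + ((j : ℝ) + 1)))) := by
    apply Summable.of_nonneg_of_le
      (fun j => by positivity)
      (fun j => ?_)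
      ((summable_geometric_of_lt_one (le_of_lt hr0) hr1).mul_left (r / x))
    have hxj : (0:ℝ) < x + ((j:ℝ) + 1) := by positivity
    have h1 : (1:ℝ) / (x + ((j:ℝ) + 1)) ≤ 1 / x := by
      apply one_div_le_one_div_of_le hx
      have := Nat.cast_nonneg (α := ℝ) j; linarith
    have hrp : (0:ℝ) ≤ r ^ (j + 1) := by positivity
    calc r ^ (j + 1) * (1 / (x + ((j:ℝ) + 1))) ≤ r ^ (j + 1) * (1 / x) :=
          mul_le_mul_of_nonneg_left h1 hrp
      _ = r / x * r ^ j := by rw [pow_succ]; ring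
  -- lower bound the series termwise by a geometric series
  have hgeo : Summable (fun j : ℕ => r / (x + 1) * (r * s) ^ j) :=
    (summable_geometric_of_lt_one hrs0 hrs1).mul_left _
  have hterm : ∀ j : ℕ, r / (x + 1) * (r * s) ^ j ≤ r ^ (j + 1) * (1 / (x + ((j : ℝ) + 1))) := by
    intro j
    have hxj : (0:ℝ) < x + ((j:ℝ) + 1) := by positivity
    have hb := pow_bound x hx j
    have hx1 : (0:ℝ) < x + 1 := by linarith
    rw [mul_one_div, mul_pow, div_mul_eq_mul_div, div_le_div_iff₀ hx1 hxj]
    calc r * (r ^ j * s ^ j) * (x + ((j:ℝ) + 1)) = r ^ (j+1) * (s ^ j * (x + ((j:ℝ) + 1))) := by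
          rw [pow_succ]; ring
      _ ≤ r ^ (j+1) * (x + 1) := by
          apply mul_le_mul_of_nonneg_left hb (by positivity)
  have hS : r / (x + 1) * (1 - r * s)⁻¹ ≤
      ∑' j : ℕ, r ^ (j + 1) * (1 / (x + ((j : ℝ) + 1))) := by
    have := Summable.tsum_le_tsum hterm hgeo hsum
    calc r / (x + 1) * (1 - r * s)⁻¹
        = ∑' j : ℕ, r / (x + 1) * (r * s) ^ j := by
          rw [tsum_mul_left, tsum_geometric_of_lt_one hrs0 hrs1]
      _ ≤ _ := this
  -- coefficient is nonnegative
  have hC : (0:ℝ) ≤ (α + 1 + x) / (α * (1 - q)) + x * q * α := by positivity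
  have hmul : ((α + 1 + x) / (α * (1 - q)) + x * q * α) * (r / (x + 1) * (1 - r * s)⁻¹) ≤
      ((α + 1 + x) / (α * (1 - q)) + x * q * α) *
        ∑' j : ℕ, r ^ (j + 1) * (1 / (x + ((j : ℝ) + 1))) :=
    mul_le_mul_of_nonneg_left hS hC
  refine le_trans ?_ hmul
  -- final algebraic inequality
  have hx1 : (0:ℝ) < x + 1 := by linarith
  have hx2 : (0:ℝ) < x + 2 := by linarith
  have hD : 0 < 1 - r * s := by linarith
  have haq : 0 < α * (1 - q) := by positivity
  have hD' : (1 - α * (1 - q) / (α + 1) * ((x + 1) / (x + 2))) ≠ 0 := ne_of_gt hD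
  have hDD : (0:ℝ) < (α + 1) * (x + 2) - α * (1 - q) * (x + 1) := by nlinarith [mul_nonneg (mul_nonneg hα.le hq0) hx1.le]
  rw [hr_def, hs_def]
  rw [show (1 - α * (1 - q) / (α + 1) * ((x + 1) / (x + 2)))⁻¹ =
      ((α + 1) * (x + 2)) / ((α + 1) * (x + 2) - α * (1 - q) * (x + 1)) by
    rw [inv_eq_one_div]
    rw [div_eq_div_iff hD' (ne_of_gt hDD)]
    field_simp]
  rw [show ((α + 1 + x) / (α * (1 - q)) + x * q * α) *
      (α * (1 - q) / (α + 1) / (x + 1) *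
        ((α + 1) * (x + 2) / ((α + 1) * (x + 2) - α * (1 - q) * (x + 1)))) =
      ((α + 1 + x) + x * q * α * (α * (1 - q))) * (x + 2) /
        ((x + 1) * ((α + 1) * (x + 2) - α * (1 - q) * (x + 1))) by
    field_simp]
  rw [le_div_iff₀ (by positivity)]
  nlinarith [mul_pos hα hx, mul_nonneg hq0 (mul_pos hα hx).le,
    mul_nonneg (mul_nonneg hq0 hα.le) (mul_pos hα (mul_pos hx hx)).le,
    mul_nonneg (mul_nonneg hq0 hq0) (mul_pos hα hα).le,
    mul_nonneg (mul_nonneg hq0 hα.le) (mul_pos hα hx).le,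
    mul_nonneg hq0 hα.le, mul_pos haq hx]
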